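/- Let ε > 0 and define C₁ = sup{ ‖p‖_{[-1,1],∞} : p ∈ span{ζ_i : σ_i > ε}, ‖p‖_{m,∞} ≤ 1 } and C₂ = sup{ ‖p − Q_ε(p)‖_{[-1,1],∞} : p ∈ P_n, ‖p‖_{[-γ,γ],∞} ≤ ε^{-1} }. Then for every continuous f on [-1,1] and every polynomial p of degree at most n: ‖f − Q_ε(f)‖_{[-1,1],∞} ≤ (1 + √(m+1)·C₁)·‖f − p‖_{[-1,1],∞} + C₂·ε·‖p‖_{[-γ,γ],∞}. -/

import Mathlib

open MeasureTheory Finset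

noncomputable section

/-- The equispaced node `x_k = -1 + 2k/m` in `[-1,1]`. -/
def node (m k : ℕ) : ℝ := -1 + 2 * (k : ℝ) / (m : ℝ)

/-- The discrete semi-inner product `⟨f,g⟩_{m,2} = (2/(m+1)) Σ_{k=0}^m f(x_k) conj(g(x_k))`. -/
def discInner (m : ℕ) (f g : ℝ → ℂ) : ℂ :=
  (2 / ((m : ℂ) + 1)) * ∑ k ∈ Finset.range (m + 1), f (node m k) * (starRingEnd ℂ) (g (node m k))

/-- The discrete `ℓ²` semi-norm `‖f‖_{m,2}`. -/
def discNorm (m : ℕ) (f : ℝ → ℂ) : ℝ :=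
  Real.sqrt ((2 / ((m : ℝ) + 1)) * ∑ k ∈ Finset.range (m + 1), ‖f (node m k)‖ ^ 2)

/-- The discrete sup semi-norm `‖f‖_{m,∞} = max_{0 ≤ k ≤ m} |f(x_k)|`. -/
def discSup (m : ℕ) (f : ℝ → ℂ) : ℝ :=
  ⨆ k : Fin (m + 1), ‖f (node m (k : ℕ))‖

/-- The uniform norm `‖f‖_{I,∞} = sup_{x ∈ I} |f(x)|`. -/
def supNorm (I : Set ℝ) (f : ℝ → ℂ) : ℝ :=
  ⨆ x : I, ‖f (x : ℝ)‖

/-- The Jacobi-type weight `w_γ^{(α,β)}(x) = (1 - x/γ)^α (1 + x/γ)^β`. -/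
def jweight (α β γ x : ℝ) : ℝ := (1 - x / γ) ^ α * (1 + x / γ) ^ β

/-- The weighted `L²` inner product `⟨f,g⟩_w = ∫_{-γ}^{γ} f conj(g) w_γ^{(α,β)}`. -/
def wInner (α β γ : ℝ) (f g : ℝ → ℂ) : ℂ :=
  ∫ x in (-γ)..γ, f x * (starRingEnd ℂ) (g x) * ((jweight α β γ x : ℝ) : ℂ)

/-- The weighted `L²` norm `‖f‖_w`. -/
def wNorm (α β γ : ℝ) (f : ℝ → ℂ) : ℝ :=
  Real.sqrt (∫ x in (-γ)..γ, ‖f x‖ ^ 2 * jweight α β γ x)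

/-- `h₀^{(α,β)} = 2^{α+β+1} Γ(α+1) Γ(β+1) / ((α+β+1) Γ(α+β+1))`. -/
def h0 (α β : ℝ) : ℝ :=
  2 ^ (α + β + 1) * Real.Gamma (α + 1) * Real.Gamma (β + 1) /
    ((α + β + 1) * Real.Gamma (α + β + 1))

/-- A complex polynomial regarded as a function of a real variable. -/
def pf (p : Polynomial ℂ) : ℝ → ℂ := fun x => p.eval (x : ℂ)

/-- The constant `c_{n,γ,α,β} = max_{x ∈ [-γ,γ]} (Σ_{i=0}^n |φ_i(x)|²)^{1/2}`. -/
def cConst (n : ℕ) (γ : ℝ) (φ : ℕ → Polynomial ℂ) : ℝ :=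
  ⨆ x : Set.Icc (-γ) γ,
    Real.sqrt (∑ i ∈ Finset.range (n + 1), ‖pf (φ i) (x : ℝ)‖ ^ 2)

/-- The regularized frame approximation operator
`Q_δ(f) = Σ_{i : σ_i > δ} σ_i^{-2} ⟨f,ζ_i⟩_{m,2} ζ_i`. -/
def Qop (m n : ℕ) (ζ : Fin (n + 1) → Polynomial ℂ) (σ : Fin (n + 1) → ℝ) (δ : ℝ)
    (f : ℝ → ℂ) : ℝ → ℂ :=
  fun x => ∑ i ∈ Finset.univ.filter (fun i : Fin (n + 1) => δ < σ i),
    (discInner m f (pf (ζ i)) / ((σ i ^ 2 : ℝ) : ℂ)) * pf (ζ i) x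

/-- The quantity `C(m,n,γ,δ) = sup{‖p‖_{[-1,1],∞} : p ∈ P_n, ‖p‖_{m,∞} ≤ 1,
‖p‖_{[-γ,γ],∞} ≤ δ⁻¹}`. -/
def Cquant (m n : ℕ) (γ δ : ℝ) : ℝ :=
  sSup {r : ℝ | ∃ p : Polynomial ℂ, p.natDegree ≤ n ∧ discSup m (pf p) ≤ 1 ∧
    supNorm (Set.Icc (-γ) γ) (pf p) ≤ δ⁻¹ ∧ r = supNorm (Set.Icc (-1) 1) (pf p)}

/-- The constant `C₁ = sup{‖p‖_{[-1,1],∞} : p ∈ span{ζ_i : σ_i > ε}, ‖p‖_{m,∞} ≤ 1}`. -/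
def C1const (m n : ℕ) (ζ : Fin (n + 1) → Polynomial ℂ) (σ : Fin (n + 1) → ℝ) (ε : ℝ) : ℝ :=
  sSup {r : ℝ | ∃ p : Polynomial ℂ, p ∈ Submodule.span ℂ (ζ '' {i | ε < σ i}) ∧
    discSup m (pf p) ≤ 1 ∧ r = supNorm (Set.Icc (-1) 1) (pf p)}

/-- The constant `C₂ = sup{‖p - Q_ε(p)‖_{[-1,1],∞} : p ∈ P_n, ‖p‖_{[-γ,γ],∞} ≤ ε⁻¹}`. -/
def C2const (m n : ℕ) (γ : ℝ) (ζ : Fin (n + 1) → Polynomial ℂ) (σ : Fin (n + 1) → ℝ)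
    (ε : ℝ) : ℝ :=
  sSup {r : ℝ | ∃ p : Polynomial ℂ, p.natDegree ≤ n ∧
    supNorm (Set.Icc (-γ) γ) (pf p) ≤ ε⁻¹ ∧
    r = supNorm (Set.Icc (-1) 1) (fun x => pf p x - Qop m n ζ σ ε (pf p) x)}

/-- The condition number `κ(Q_δ) = sup{‖Q_δ(q)‖_{[-1,1],∞} : q ∈ C([-1,1]), ‖q‖_{m,∞} ≤ 1}`. -/
def kappa (m n : ℕ) (ζ : Fin (n + 1) → Polynomial ℂ) (σ : Fin (n + 1) → ℝ) (δ : ℝ) : ℝ :=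
  sSup {r : ℝ | ∃ q : ℝ → ℂ, ContinuousOn q (Set.Icc (-1) 1) ∧ discSup m q ≤ 1 ∧
    r = supNorm (Set.Icc (-1) 1) (Qop m n ζ σ δ q)}

/-- The Bernstein ellipse `E_θ = {(z + z⁻¹)/2 : 1 ≤ |z| ≤ θ}`. -/
def bernsteinEllipse (θ : ℝ) : Set ℂ :=
  {w | ∃ z : ℂ, 1 ≤ ‖z‖ ∧ ‖z‖ ≤ θ ∧ w = (z + z⁻¹) / 2}

/-- The uniform norm on a subset of `ℂ`. -/
def supNormC (E : Set ℂ) (f : ℂ → ℂ) : ℝ :=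
  ⨆ z : E, ‖f (z : ℂ)‖

/-- The `C^k` norm `‖f‖_{C^k([-1,1])} = max_{0 ≤ j ≤ k} ‖f^{(j)}‖_{[-1,1],∞}`. -/
def CkNorm (k : ℕ) (f : ℝ → ℂ) : ℝ :=
  ⨆ j : Fin (k + 1), supNorm (Set.Icc (-1) 1) (iteratedDerivWithin (j : ℕ) f (Set.Icc (-1) 1))

section Helpers

lemma supNorm_nonneg (I : Set ℝ) (f : ℝ → ℂ) : 0 ≤ supNorm I f :=
  Real.iSup_nonneg (fun _ => norm_nonneg _)

lemma bddAbove_range_abs {a b : ℝ} {f : ℝ → ℂ} (hf : ContinuousOn f (Set.Icc a b)) :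
    BddAbove (Set.range fun x : Set.Icc a b => ‖f x‖) := by
  have h : ContinuousOn (fun x => ‖f x‖) (Set.Icc a b) :=
    continuous_norm.comp_continuousOn hf
  have := (isCompact_Icc (a := a) (b := b)).bddAbove_image h
  rwa [show ((fun x => ‖f x‖) '' Set.Icc a b) =
    Set.range fun x : Set.Icc a b => ‖f x‖ from (Set.range_restrict _ _).symm] at this

lemma abs_le_supNorm {a b : ℝ} {f : ℝ → ℂ} (hf : ContinuousOn f (Set.Icc a b))
    {x : ℝ} (hx : x ∈ Set.Icc a b) : ‖f x‖ ≤ supNorm (Set.Icc a b) f :=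
  le_ciSup (bddAbove_range_abs hf) (⟨x, hx⟩ : Set.Icc a b)

lemma supNorm_le {I : Set ℝ} {f : ℝ → ℂ} {M : ℝ} (h0 : 0 ≤ M)
    (h : ∀ x ∈ I, ‖f x‖ ≤ M) : supNorm I f ≤ M :=
  Real.iSup_le (fun x => h x x.2) h0

lemma abs_le_discSup (m : ℕ) (f : ℝ → ℂ) (k : Fin (m + 1)) :
    ‖f (node m (k : ℕ))‖ ≤ discSup m f :=
  le_ciSup (f := fun k : Fin (m+1) => ‖f (node m (k : ℕ))‖)
    (Set.Finite.bddAbove (Set.finite_range _)) k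

lemma discSup_le {m : ℕ} {f : ℝ → ℂ} {M : ℝ}
    (h : ∀ k : Fin (m + 1), ‖f (node m (k : ℕ))‖ ≤ M) : discSup m f ≤ M :=
  ciSup_le h

lemma node_mem {m : ℕ} (hm : 1 ≤ m) {k : ℕ} (hk : k ∈ Finset.range (m + 1)) :
    node m k ∈ Set.Icc (-1 : ℝ) 1 := by
  have hm' : (0:ℝ) < m := by exact_mod_cast hm
  have hk' : (k:ℝ) ≤ m := by exact_mod_cast Nat.lt_succ_iff.mp (Finset.mem_range.mp hk)
  constructor
  · have : (0:ℝ) ≤ 2 * k / m := by positivity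
    simp [node]; linarith
  · have : 2 * (k:ℝ) / m ≤ 2 := by
      rw [div_le_iff₀ hm']; nlinarith [Nat.cast_nonneg (α := ℝ) k]
    simp [node]; linarith

end Helpers
section Tmap

open Complex Finset

/-- The sampling map into Euclidean space. -/
def Tmap (m : ℕ) (f : ℝ → ℂ) : EuclideanSpace ℂ (Fin (m + 1)) :=
  WithLp.toLp 2 (fun k => ((Real.sqrt (2 / ((m : ℝ) + 1)) : ℝ) : ℂ) * f (node m (k : ℕ)))

lemma csq (m : ℕ) : ((Real.sqrt (2 / ((m : ℝ) + 1)) : ℝ) : ℂ) *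
    ((Real.sqrt (2 / ((m : ℝ) + 1)) : ℝ) : ℂ) = 2 / ((m : ℂ) + 1) := by
  rw [← Complex.ofReal_mul, Real.mul_self_sqrt (by positivity : (0:ℝ) ≤ 2 / ((m:ℝ)+1))]
  push_cast
  ring

lemma Tmap_inner (m : ℕ) (f g : ℝ → ℂ) :
    (inner ℂ (Tmap m g) (Tmap m f) : ℂ) = discInner m f g := by
  simp only [PiLp.inner_apply, Tmap, PiLp.toLp_apply, RCLike.inner_apply, map_mul, Complex.conj_ofReal]
  rw [discInner, ← Fin.sum_univ_eq_sum_range (fun k => f (node m k) * (starRingEnd ℂ) (g (node m k))),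
    Finset.mul_sum]
  refine Finset.sum_congr rfl (fun k _ => ?_)
  rw [← csq m]
  ring

lemma Tmap_norm_sq (m : ℕ) (f : ℝ → ℂ) :
    ‖Tmap m f‖ ^ 2 = (2 / ((m : ℝ) + 1)) *
      ∑ k ∈ Finset.range (m + 1), ‖f (node m k)‖ ^ 2 := by
  rw [EuclideanSpace.norm_eq, Real.sq_sqrt (by positivity),
    ← Fin.sum_univ_eq_sum_range (fun k => ‖f (node m k)‖ ^ 2), Finset.mul_sum]
  refine Finset.sum_congr rfl (fun k _ => ?_)
  simp only [Tmap, PiLp.toLp_apply, norm_mul, Complex.norm_real, Real.norm_eq_abs]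
  rw [_root_.abs_of_nonneg (Real.sqrt_nonneg _), mul_pow, Real.sq_sqrt (by positivity)]

end Tmap
section Lin

open Complex Finset

lemma pf_smul (c : ℂ) (p : Polynomial ℂ) (x : ℝ) : pf (c • p) x = c * pf p x := by
  simp [pf]

lemma pf_sum {ι : Type*} (s : Finset ι) (c : ι → ℂ) (q : ι → Polynomial ℂ) (x : ℝ) :
    pf (∑ i ∈ s, c i • q i) x = ∑ i ∈ s, c i * pf (q i) x := by
  simp [pf, Polynomial.eval_finset_sum]

lemma continuous_pf (p : Polynomial ℂ) : Continuous (pf p) :=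
  p.continuous.comp Complex.continuous_ofReal

lemma discInner_sum_left {ι : Type*} (m : ℕ) (s : Finset ι) (c : ι → ℂ) (u : ι → ℝ → ℂ)
    (g : ℝ → ℂ) :
    discInner m (fun x => ∑ i ∈ s, c i * u i x) g = ∑ i ∈ s, c i * discInner m (u i) g := by
  simp only [discInner, Finset.mul_sum, Finset.sum_mul]
  rw [Finset.sum_comm]
  exact Finset.sum_congr rfl fun i _ => Finset.sum_congr rfl fun k _ => by ring

lemma discInner_sub_left (m : ℕ) (f g h : ℝ → ℂ) :
    discInner m (fun x => f x - g x) h = discInner m f h - discInner m g h := by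
  simp only [discInner, sub_mul, Finset.sum_sub_distrib, mul_sub]

lemma discInner_const_mul_left (m : ℕ) (c : ℂ) (f g : ℝ → ℂ) :
    discInner m (fun x => c * f x) g = c * discInner m f g := by
  simp only [discInner, Finset.mul_sum]
  exact Finset.sum_congr rfl fun k _ => by ring

lemma Tmap_sum {ι : Type*} (m : ℕ) (s : Finset ι) (c : ι → ℂ) (u : ι → ℝ → ℂ) :
    Tmap m (fun x => ∑ i ∈ s, c i * u i x) = ∑ i ∈ s, c i • Tmap m (u i) := by
  ext k
  rw [WithLp.ofLp_sum, Finset.sum_apply]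
  simp only [Tmap, PiLp.toLp_apply, Finset.mul_sum, PiLp.smul_apply, smul_eq_mul]
  exact Finset.sum_congr rfl fun i _ => by ring

end Lin
section Ortho

open Complex Finset

variable {m n : ℕ} {ζ : Fin (n + 1) → Polynomial ℂ} {σ : Fin (n + 1) → ℝ}

lemma w_orthonormal (hσ : ∀ i, 0 < σ i)
    (hζd : ∀ i j, discInner m (pf (ζ i)) (pf (ζ j)) =
      if i = j then (((σ i) ^ 2 : ℝ) : ℂ) else 0) :
    Orthonormal ℂ (fun i => ((σ i : ℝ) : ℂ)⁻¹ • Tmap m (pf (ζ i))) := by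
  rw [orthonormal_iff_ite]
  intro i j
  rw [inner_smul_left, inner_smul_right, Tmap_inner, hζd j i]
  by_cases h : i = j
  · subst h
    have hne : ((σ i : ℝ) : ℂ) ≠ 0 := by
      exact_mod_cast Complex.ofReal_ne_zero.mpr (ne_of_gt (hσ i))
    simp only [if_pos rfl, map_inv₀, Complex.conj_ofReal]
    push_cast
    field_simp
  · simp [h, Ne.symm h]

lemma Tnorm_sq_le {g : ℝ → ℂ} {t : ℝ}
    (h : ∀ k ∈ Finset.range (m + 1), ‖g (node m k)‖ ≤ t) :
    ‖Tmap m g‖ ^ 2 ≤ 2 * t ^ 2 := by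
  rw [Tmap_norm_sq]
  have h1 : ∑ k ∈ Finset.range (m + 1), ‖g (node m k)‖ ^ 2 ≤
      ∑ _k ∈ Finset.range (m + 1), t ^ 2 :=
    Finset.sum_le_sum fun k hk =>
      pow_le_pow_left₀ (norm_nonneg _) (h k hk) 2
  have hm : (0:ℝ) < (m:ℝ) + 1 := by positivity
  calc (2 / ((m : ℝ) + 1)) * ∑ k ∈ Finset.range (m + 1), ‖g (node m k)‖ ^ 2
      ≤ (2 / ((m : ℝ) + 1)) * (((m:ℝ) + 1) * t ^ 2) := by
        apply mul_le_mul_of_nonneg_left _ (by positivity)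
        simpa [Finset.sum_const, nsmul_eq_mul] using h1
    _ = 2 * t ^ 2 := by field_simp
end Ortho
section Bdd

open Complex Finset

variable {m n : ℕ} {ζ : Fin (n + 1) → Polynomial ℂ} {σ : Fin (n + 1) → ℝ}

lemma C1_bddAbove (hσ : ∀ i, 0 < σ i)
    (hζd : ∀ i j, discInner m (pf (ζ i)) (pf (ζ j)) =
      if i = j then (((σ i) ^ 2 : ℝ) : ℂ) else 0)
    {ε : ℝ} (hε : 0 < ε) :
    BddAbove {r : ℝ | ∃ p : Polynomial ℂ, p ∈ Submodule.span ℂ (ζ '' {i | ε < σ i}) ∧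
      discSup m (pf p) ≤ 1 ∧ r = supNorm (Set.Icc (-1) 1) (pf p)} := by
  set M : Fin (n+1) → ℝ := fun i => supNorm (Set.Icc (-1:ℝ) 1) (pf (ζ i)) with hM
  refine ⟨Real.sqrt 2 / ε * ∑ i, M i, fun r hr => ?_⟩
  obtain ⟨p, hsp, hds, rfl⟩ := hr
  rw [Finsupp.mem_span_image_iff_linearCombination] at hsp
  obtain ⟨l, hlsupp, hlp⟩ := hsp
  rw [Finsupp.mem_supported] at hlsupp
  have hrep : p = ∑ i ∈ l.support, l i • ζ i := by
    rw [← hlp, Finsupp.linearCombination_apply, Finsupp.sum]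
  have hpf : ∀ x, pf p x = ∑ i ∈ l.support, l i * pf (ζ i) x := fun x => by
    rw [hrep, pf_sum]
  have hw := w_orthonormal hσ hζd
  set w : Fin (n+1) → EuclideanSpace ℂ (Fin (m+1)) :=
    fun i => ((σ i : ℝ) : ℂ)⁻¹ • Tmap m (pf (ζ i)) with hwdef
  have hT : Tmap m (pf p) = ∑ i ∈ l.support, ((l i * ((σ i : ℝ) : ℂ))) • w i := by
    have h0 : Tmap m (pf p) = ∑ i ∈ l.support, l i • Tmap m (pf (ζ i)) := by
      rw [show pf p = fun x => ∑ i ∈ l.support, l i * pf (ζ i) x from funext hpf, Tmap_sum]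
    rw [h0]
    refine Finset.sum_congr rfl fun i _ => ?_
    rw [hwdef, smul_smul]
    congr 1
    have hne : ((σ i:ℝ):ℂ) ≠ 0 := Complex.ofReal_ne_zero.mpr (ne_of_gt (hσ i))
    field_simp
  have hcoef : ∀ i ∈ l.support, ‖l i‖ ≤ Real.sqrt 2 / ε := by
    intro i hi
    have hin : (inner ℂ (w i) (Tmap m (pf p)) : ℂ) = (l i * ((σ i : ℝ) : ℂ)) := by
      rw [hT]; exact hw.inner_right_sum _ hi
    have hb : ‖(inner ℂ (w i) (Tmap m (pf p)) : ℂ)‖ ^ 2 ≤ ‖Tmap m (pf p)‖ ^ 2 := by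
      simpa using hw.sum_inner_products_le (s := {i}) (x := Tmap m (pf p))
    have hb2 : ‖Tmap m (pf p)‖ ^ 2 ≤ 2 * 1 ^ 2 := Tnorm_sq_le (fun k hk =>
      (abs_le_discSup m (pf p) ⟨k, Finset.mem_range.mp hk⟩).trans hds)
    rw [hin] at hb
    have hsq : (‖l i‖ * σ i) ^ 2 ≤ 2 := by
      have h3 := hb.trans hb2
      rw [norm_mul] at h3
      simpa [Complex.norm_real, Real.norm_eq_abs, _root_.abs_of_pos (hσ i), mul_pow]
        using h3
    have hεσ : ε < σ i := hlsupp hi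
    have ha : (0:ℝ) ≤ ‖l i‖ := norm_nonneg _
    have hs2 : Real.sqrt 2 ^ 2 = 2 := Real.sq_sqrt (by norm_num)
    have h4 : ‖l i‖ * σ i ≤ Real.sqrt 2 := by
      nlinarith [Real.sqrt_nonneg 2, hσ i, mul_nonneg ha (le_of_lt (hσ i))]
    rw [le_div_iff₀ hε]
    nlinarith [hσ i]
  refine supNorm_le (mul_nonneg (by positivity)
    (Finset.sum_nonneg fun i _ => supNorm_nonneg _ _)) (fun x hx => ?_)
  rw [hpf x]
  calc ‖∑ i ∈ l.support, l i * pf (ζ i) x‖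
      ≤ ∑ i ∈ l.support, ‖l i * pf (ζ i) x‖ := norm_sum_le _ _
    _ ≤ ∑ i ∈ l.support, (Real.sqrt 2 / ε) * M i := by
        refine Finset.sum_le_sum fun i hi => ?_
        rw [norm_mul]
        exact mul_le_mul (hcoef i hi)
          (abs_le_supNorm (continuous_pf (ζ i)).continuousOn hx)
          (norm_nonneg _) (by positivity)
    _ ≤ ∑ i, (Real.sqrt 2 / ε) * M i := by
        refine Finset.sum_le_sum_of_subset_of_nonneg (Finset.subset_univ _) fun i _ _ => ?_
        exact mul_nonneg (by positivity) (supNorm_nonneg _ _)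
    _ = Real.sqrt 2 / ε * ∑ i, M i := by rw [Finset.mul_sum]

end Bdd
section Bdd2

open Complex Finset

variable {m n : ℕ} {ζ : Fin (n + 1) → Polynomial ℂ} {σ : Fin (n + 1) → ℝ}

lemma discInner_abs_le {p : Polynomial ℂ} {γ ε : ℝ} (hγ : 1 ≤ γ) (hε : 0 < ε) (hm : 1 ≤ m)
    (hps : supNorm (Set.Icc (-γ) γ) (pf p) ≤ ε⁻¹) (i : Fin (n + 1)) :
    ‖discInner m (pf p) (pf (ζ i))‖ ≤
      2 * ε⁻¹ * supNorm (Set.Icc (-1:ℝ) 1) (pf (ζ i)) := by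
  set M := supNorm (Set.Icc (-1:ℝ) 1) (pf (ζ i)) with hM
  have hsub : Set.Icc (-1:ℝ) 1 ⊆ Set.Icc (-γ) γ := Set.Icc_subset_Icc (by linarith) hγ
  have hterm : ∀ k ∈ Finset.range (m + 1),
      ‖pf p (node m k) * (starRingEnd ℂ) (pf (ζ i) (node m k))‖ ≤ ε⁻¹ * M := by
    intro k hk
    have hx := node_mem hm hk
    rw [norm_mul, Complex.norm_conj]
    refine mul_le_mul ?_ (abs_le_supNorm (continuous_pf (ζ i)).continuousOn hx)
      (norm_nonneg _) (by positivity)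
    exact (abs_le_supNorm (continuous_pf p).continuousOn (hsub hx)).trans hps
  have hM0 : 0 ≤ M := supNorm_nonneg _ _
  have habs : ‖2 / ((m : ℂ) + 1)‖ = 2 / ((m : ℝ) + 1) := by
    rw [norm_div]
    simp [Complex.norm_two]
    rw [show ((m:ℂ) + 1) = (((m:ℝ) + 1 : ℝ) : ℂ) by push_cast; ring, Complex.norm_real, Real.norm_eq_abs,
      _root_.abs_of_pos (by positivity)]
  calc ‖discInner m (pf p) (pf (ζ i))‖
      ≤ ‖2 / ((m : ℂ) + 1)‖ *
        ∑ k ∈ Finset.range (m + 1),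
          ‖pf p (node m k) * (starRingEnd ℂ) (pf (ζ i) (node m k))‖ := by
        rw [discInner, norm_mul]
        exact mul_le_mul_of_nonneg_left (norm_sum_le _ _) (norm_nonneg _)
    _ ≤ (2 / ((m : ℝ) + 1)) * (((m:ℝ) + 1) * (ε⁻¹ * M)) := by
        rw [habs]
        refine mul_le_mul_of_nonneg_left ?_ (by positivity)
        simpa [Finset.sum_const, nsmul_eq_mul] using Finset.sum_le_sum hterm
    _ = 2 * ε⁻¹ * M := by field_simp

lemma C2_bddAbove (hσ : ∀ i, 0 < σ i) {γ ε : ℝ} (hγ : 1 ≤ γ) (hε : 0 < ε) (hm : 1 ≤ m) :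
    BddAbove {r : ℝ | ∃ p : Polynomial ℂ, p.natDegree ≤ n ∧
      supNorm (Set.Icc (-γ) γ) (pf p) ≤ ε⁻¹ ∧
      r = supNorm (Set.Icc (-1) 1) (fun x => pf p x - Qop m n ζ σ ε (pf p) x)} := by
  set M : Fin (n+1) → ℝ := fun i => supNorm (Set.Icc (-1:ℝ) 1) (pf (ζ i)) with hMdef
  have hM0 : ∀ i, 0 ≤ M i := fun i => supNorm_nonneg _ _
  set B : ℝ := ε⁻¹ + ∑ i, (2 * ε⁻¹ * M i) / ε ^ 2 * M i with hB
  have hB0 : 0 ≤ B := by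
    refine add_nonneg (by positivity) (Finset.sum_nonneg fun i _ => ?_)
    have := hM0 i
    positivity
  refine ⟨B, fun r hr => ?_⟩
  obtain ⟨p, hdeg, hps, rfl⟩ := hr
  refine supNorm_le hB0 (fun x hx => ?_)
  have hsub : Set.Icc (-1:ℝ) 1 ⊆ Set.Icc (-γ) γ := Set.Icc_subset_Icc (by linarith) hγ
  have h1 : ‖pf p x‖ ≤ ε⁻¹ :=
    (abs_le_supNorm (continuous_pf p).continuousOn (hsub hx)).trans hps
  have h2 : ‖Qop m n ζ σ ε (pf p) x‖ ≤ ∑ i, (2 * ε⁻¹ * M i) / ε ^ 2 * M i := by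
    rw [Qop]
    calc ‖∑ i ∈ Finset.univ.filter (fun i : Fin (n+1) => ε < σ i),
          (discInner m (pf p) (pf (ζ i)) / (((σ i ^ 2 : ℝ)) : ℂ)) * pf (ζ i) x‖
        ≤ ∑ i ∈ Finset.univ.filter (fun i : Fin (n+1) => ε < σ i),
          ‖(discInner m (pf p) (pf (ζ i)) / (((σ i ^ 2 : ℝ)) : ℂ)) * pf (ζ i) x‖ :=
          norm_sum_le _ _
      _ ≤ ∑ i ∈ Finset.univ.filter (fun i : Fin (n+1) => ε < σ i),
          (2 * ε⁻¹ * M i) / ε ^ 2 * M i := by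
          refine Finset.sum_le_sum fun i hi => ?_
          have hεσ : ε < σ i := (Finset.mem_filter.mp hi).2
          rw [norm_mul, norm_div, Complex.norm_real, Real.norm_eq_abs,
            _root_.abs_of_pos (by nlinarith : (0:ℝ) < σ i ^ 2)]
          refine mul_le_mul ?_ (abs_le_supNorm (continuous_pf (ζ i)).continuousOn hx)
            (norm_nonneg _) (by have := hM0 i; positivity)
          refine div_le_div₀ (by have := hM0 i; positivity)
            (discInner_abs_le hγ hε hm hps i) (by positivity) (by nlinarith)
      _ ≤ ∑ i, (2 * ε⁻¹ * M i) / ε ^ 2 * M i := by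
          refine Finset.sum_le_sum_of_subset_of_nonneg (Finset.filter_subset _ _)
            fun i _ _ => ?_
          have := hM0 i
          positivity
  calc ‖pf p x - Qop m n ζ σ ε (pf p) x‖
      ≤ ‖pf p x‖ + ‖Qop m n ζ σ ε (pf p) x‖ :=
        norm_sub_le _ _ -- name?
    _ ≤ B := by rw [hB]; exact add_le_add h1 h2

end Bdd2
/-- the rough error bound
`‖f − Q_ε(f)‖ ≤ (1 + √(m+1) C₁) ‖f − p‖ + C₂ ε ‖p‖`. -/
theorem stmt5 (α β γ : ℝ) (hα : -1 < α) (hβ : -1 < β) (hγ : 1 < γ)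
    (m n : ℕ) (hn : 1 ≤ n) (hmn : n ≤ m)
    (ζ : Fin (n + 1) → Polynomial ℂ) (σ : Fin (n + 1) → ℝ) (hσ : ∀ i, 0 < σ i)
    (hζdeg : ∀ i, (ζ i).natDegree ≤ n)
    (hζspan : ∀ p : Polynomial ℂ, p.natDegree ≤ n → p ∈ Submodule.span ℂ (Set.range ζ))
    (hζw : ∀ i j, wInner α β γ (pf (ζ i)) (pf (ζ j)) = if i = j then 1 else 0)
    (hζd : ∀ i j, discInner m (pf (ζ i)) (pf (ζ j)) =
      if i = j then (((σ i) ^ 2 : ℝ) : ℂ) else 0)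
    (ε : ℝ) (hε : 0 < ε)
    (f : ℝ → ℂ) (hf : ContinuousOn f (Set.Icc (-1) 1))
    (p : Polynomial ℂ) (hp : p.natDegree ≤ n) :
    supNorm (Set.Icc (-1) 1) (fun x => f x - Qop m n ζ σ ε f x) ≤
      (1 + Real.sqrt ((m : ℝ) + 1) * C1const m n ζ σ ε) *
        supNorm (Set.Icc (-1) 1) (fun x => f x - pf p x) +
      C2const m n γ ζ σ ε * ε * supNorm (Set.Icc (-γ) γ) (pf p) := by
  classical
  have hm : 1 ≤ m := hn.trans hmn
  have hm1 : (0:ℝ) < (m:ℝ) + 1 := by positivity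
  set S : Finset (Fin (n+1)) := Finset.univ.filter (fun i => ε < σ i) with hS
  set g : ℝ → ℂ := fun x => f x - pf p x with hg
  set t : ℝ := supNorm (Set.Icc (-1:ℝ) 1) g with ht
  set s : ℝ := supNorm (Set.Icc (-γ) γ) (pf p) with hsdef
  have ht0 : 0 ≤ t := supNorm_nonneg _ _
  have hs0 : 0 ≤ s := supNorm_nonneg _ _
  have hgc : ContinuousOn g (Set.Icc (-1:ℝ) 1) := hf.sub (continuous_pf p).continuousOn
  have hQcont : ∀ h : ℝ → ℂ, Continuous (Qop m n ζ σ ε h) := by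
    intro h
    exact continuous_finset_sum _ fun i _ => continuous_const.mul (continuous_pf (ζ i))
  have hsub : Set.Icc (-1:ℝ) 1 ⊆ Set.Icc (-γ) γ :=
    Set.Icc_subset_Icc (by linarith) (le_of_lt hγ)
  -- Part B : ‖Q g‖ ≤ √(m+1) C1 t
  have hB : supNorm (Set.Icc (-1:ℝ) 1) (Qop m n ζ σ ε g) ≤
      Real.sqrt ((m:ℝ) + 1) * C1const m n ζ σ ε * t := by
    have hgnode : ∀ k ∈ Finset.range (m + 1), ‖g (node m k)‖ ≤ t :=
      fun k hk => abs_le_supNorm hgc (node_mem hm hk)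
    rcases eq_or_lt_of_le ht0 with h0 | hpos
    · -- t = 0
      have hgz : ∀ k ∈ Finset.range (m + 1), g (node m k) = 0 := by
        intro k hk
        have h1 := (hgnode k hk).trans (le_of_eq h0.symm)
        exact norm_eq_zero.mp (le_antisymm h1 (norm_nonneg _))
      have hQz : ∀ x, Qop m n ζ σ ε g x = 0 := by
        intro x
        rw [Qop]
        refine Finset.sum_eq_zero fun i _ => ?_
        have hdz : discInner m g (pf (ζ i)) = 0 := by
          rw [discInner, Finset.sum_eq_zero fun k hk => by rw [hgz k hk]; ring, mul_zero]
        rw [hdz]; ring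
      rw [← h0, mul_zero]
      exact supNorm_le le_rfl (fun x _ => by rw [hQz x]; simp)
    · -- t > 0
      have hw := w_orthonormal hσ hζd
      set w : Fin (n+1) → EuclideanSpace ℂ (Fin (m+1)) :=
        fun i => ((σ i : ℝ) : ℂ)⁻¹ • Tmap m (pf (ζ i)) with hwdef
      set d : Fin (n+1) → ℂ := fun i => discInner m g (pf (ζ i)) with hd
      have hinner : ∀ i, (inner ℂ (w i) (Tmap m g) : ℂ) = ((σ i : ℝ):ℂ)⁻¹ * d i := by
        intro i
        rw [hwdef, inner_smul_left, Tmap_inner, map_inv₀, Complex.conj_ofReal]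
      have hbes : ∑ i ∈ S, ‖((σ i : ℝ):ℂ)⁻¹ * d i‖ ^ 2 ≤ ‖Tmap m g‖ ^ 2 := by
        have h1 := hw.sum_inner_products_le (s := S) (x := Tmap m g)
        simpa [hinner] using h1
      have hTg : ‖Tmap m g‖ ^ 2 ≤ 2 * t ^ 2 := Tnorm_sq_le hgnode
      have hσcast : ∀ i : Fin (n+1), ((σ i : ℝ):ℂ) ≠ 0 :=
        fun i => Complex.ofReal_ne_zero.mpr (ne_of_gt (hσ i))
      have hTQ : Tmap m (Qop m n ζ σ ε g) = ∑ i ∈ S, (d i / ((σ i :ℝ):ℂ)) • w i := by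
        have h1 : Qop m n ζ σ ε g =
            fun x => ∑ i ∈ S, (d i / ((σ i ^ 2 : ℝ):ℂ)) * pf (ζ i) x := rfl
        rw [h1, Tmap_sum]
        refine Finset.sum_congr rfl fun i _ => ?_
        rw [hwdef, smul_smul]
        congr 1
        rw [show ((σ i ^ 2 : ℝ):ℂ) = ((σ i :ℝ):ℂ)^2 by push_cast; ring, sq, ← div_div,
          div_eq_mul_inv]
      have hTQn : ‖Tmap m (Qop m n ζ σ ε g)‖ ^ 2 = ∑ i ∈ S, ‖d i / ((σ i :ℝ):ℂ)‖ ^ 2 := by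
        rw [← inner_self_eq_norm_sq (𝕜 := ℂ), hTQ, hw.inner_sum, map_sum]
        refine Finset.sum_congr rfl fun i _ => ?_
        rw [RCLike.conj_mul]
        norm_cast
      have hTQle : ‖Tmap m (Qop m n ζ σ ε g)‖ ^ 2 ≤ 2 * t ^ 2 := by
        rw [hTQn]
        refine le_trans (le_of_eq (Finset.sum_congr rfl fun i _ => ?_)) (hbes.trans hTg)
        rw [inv_mul_eq_div]
      have hQnode : ∀ k : Fin (m + 1),
          ‖Qop m n ζ σ ε g (node m (k:ℕ))‖ ≤ Real.sqrt ((m:ℝ)+1) * t := by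
        intro k
        have h1 : ‖Qop m n ζ σ ε g (node m (k:ℕ))‖ ^ 2 ≤
            ∑ j ∈ Finset.range (m+1), ‖Qop m n ζ σ ε g (node m j)‖ ^ 2 :=
          Finset.single_le_sum (f := fun j => ‖Qop m n ζ σ ε g (node m j)‖ ^ 2)
            (fun j _ => by positivity) (Finset.mem_range.mpr k.isLt)
        have h2 := Tmap_norm_sq m (Qop m n ζ σ ε g)
        have h3 : ‖Qop m n ζ σ ε g (node m (k:ℕ))‖ ^ 2 ≤ ((m:ℝ)+1) * t ^ 2 := by
          have h4 : (2/((m:ℝ)+1)) * ∑ j ∈ Finset.range (m+1),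
              ‖Qop m n ζ σ ε g (node m j)‖ ^ 2 ≤ 2 * t ^ 2 := by
            rw [← h2]; exact hTQle
          have h5 : (0:ℝ) < 2/((m:ℝ)+1) := by positivity
          have h6 := mul_le_mul_of_nonneg_left h1 (le_of_lt h5)
          have h7 : 2/((m:ℝ)+1) * ‖Qop m n ζ σ ε g (node m (k:ℕ))‖ ^ 2 ≤
              2 * t ^ 2 := le_trans h6 h4
          rw [div_mul_eq_mul_div, div_le_iff₀ hm1] at h7
          nlinarith
        calc ‖Qop m n ζ σ ε g (node m (k:ℕ))‖
            = Real.sqrt (‖Qop m n ζ σ ε g (node m (k:ℕ))‖ ^ 2) :=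
              (Real.sqrt_sq (norm_nonneg _)).symm
          _ ≤ Real.sqrt (((m:ℝ)+1) * t ^ 2) := Real.sqrt_le_sqrt h3
          _ = Real.sqrt ((m:ℝ)+1) * t := by
              rw [Real.sqrt_mul (by positivity), Real.sqrt_sq ht0]
      -- construct the normalized polynomial
      set a : ℝ := (Real.sqrt ((m:ℝ)+1) * t)⁻¹ with ha
      have hsq1 : (0:ℝ) < Real.sqrt ((m:ℝ)+1) := Real.sqrt_pos.mpr hm1
      have ha0 : 0 < a := by rw [ha]; positivity
      set P : Polynomial ℂ := ∑ i ∈ S, (d i / ((σ i ^ 2 : ℝ):ℂ)) • ζ i with hP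
      set P' : Polynomial ℂ := ((a:ℝ):ℂ) • P with hP'
      have hpfP : ∀ x, pf P x = Qop m n ζ σ ε g x := by
        intro x
        rw [hP, pf_sum]
        rfl
      have hpfP' : ∀ x, pf P' x = ((a:ℝ):ℂ) * Qop m n ζ σ ε g x := by
        intro x
        rw [hP', pf_smul, hpfP]
      have hspan : P' ∈ Submodule.span ℂ (ζ '' {i | ε < σ i}) := by
        refine Submodule.smul_mem _ _ (Submodule.sum_mem _ fun i hi => ?_)
        refine Submodule.smul_mem _ _ (Submodule.subset_span ?_)
        exact ⟨i, (Finset.mem_filter.mp hi).2, rfl⟩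
      have hds : discSup m (pf P') ≤ 1 := by
        refine discSup_le fun k => ?_
        rw [hpfP', norm_mul, Complex.norm_real, Real.norm_eq_abs, _root_.abs_of_pos ha0]
        calc a * ‖Qop m n ζ σ ε g (node m (k:ℕ))‖
            ≤ a * (Real.sqrt ((m:ℝ)+1) * t) :=
              mul_le_mul_of_nonneg_left (hQnode k) (le_of_lt ha0)
          _ = 1 := by
              rw [ha]
              field_simp
      have hrle : supNorm (Set.Icc (-1:ℝ) 1) (pf P') ≤ C1const m n ζ σ ε := by
        rw [C1const]
        exact le_csSup (C1_bddAbove hσ hζd hε) ⟨P', hspan, hds, rfl⟩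
      have hC1 : 0 ≤ C1const m n ζ σ ε := (supNorm_nonneg _ _).trans hrle
      refine supNorm_le (by positivity) fun x hx => ?_
      have h6 : ‖pf P' x‖ ≤ C1const m n ζ σ ε :=
        (abs_le_supNorm (continuous_pf P').continuousOn hx).trans hrle
      have h7 : ‖pf P' x‖ = a * ‖Qop m n ζ σ ε g x‖ := by
        rw [hpfP' x, norm_mul, Complex.norm_real, Real.norm_eq_abs, _root_.abs_of_pos ha0]
      have h8 : ‖Qop m n ζ σ ε g x‖ =
          (Real.sqrt ((m:ℝ)+1) * t) * ‖pf P' x‖ := by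
        rw [h7, ha]
        field_simp
      rw [h8]
      calc (Real.sqrt ((m:ℝ)+1) * t) * ‖pf P' x‖
          ≤ (Real.sqrt ((m:ℝ)+1) * t) * C1const m n ζ σ ε :=
            mul_le_mul_of_nonneg_left h6 (by positivity)
        _ = Real.sqrt ((m:ℝ)+1) * C1const m n ζ σ ε * t := by ring
  -- Part C : ‖p - Q p‖ ≤ C2 ε s
  have hC : supNorm (Set.Icc (-1:ℝ) 1) (fun x => pf p x - Qop m n ζ σ ε (pf p) x) ≤
      C2const m n γ ζ σ ε * ε * s := by
    rcases eq_or_lt_of_le hs0 with h0 | hpos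
    · -- s = 0
      have hpz : ∀ x ∈ Set.Icc (-γ) γ, pf p x = 0 := by
        intro x hx
        have h1 := (abs_le_supNorm (continuous_pf p).continuousOn hx).trans (le_of_eq h0.symm)
        exact norm_eq_zero.mp (le_antisymm h1 (norm_nonneg _))
      have hQz : ∀ x, Qop m n ζ σ ε (pf p) x = 0 := by
        intro x
        rw [Qop]
        refine Finset.sum_eq_zero fun i _ => ?_
        have hdz : discInner m (pf p) (pf (ζ i)) = 0 := by
          rw [discInner, Finset.sum_eq_zero fun k hk => by
            rw [hpz (node m k) (hsub (node_mem hm hk))]; ring, mul_zero]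
        rw [hdz]; ring
      rw [← h0, mul_zero]
      refine supNorm_le le_rfl fun x hx => ?_
      rw [hQz x, hpz x (hsub hx)]
      simp
    · -- s > 0
      have hεs : (0:ℝ) < ε * s := by positivity
      have hεsC : ((ε * s : ℝ):ℂ) ≠ 0 := Complex.ofReal_ne_zero.mpr (ne_of_gt hεs)
      set q : Polynomial ℂ := (((ε * s : ℝ)):ℂ)⁻¹ • p with hq
      have hqpf : ∀ x, pf q x = ((ε * s : ℝ):ℂ)⁻¹ * pf p x := by
        intro x; rw [hq, pf_smul]
      have hqdeg : q.natDegree ≤ n := (Polynomial.natDegree_smul_le _ _).trans hp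
      have habsinv : ‖((ε * s : ℝ):ℂ)⁻¹‖ = (ε * s)⁻¹ := by
        rw [norm_inv, Complex.norm_real, Real.norm_eq_abs, _root_.abs_of_pos hεs]
      have hqsup : supNorm (Set.Icc (-γ) γ) (pf q) ≤ ε⁻¹ := by
        refine supNorm_le (by positivity) fun x hx => ?_
        rw [hqpf x, norm_mul, habsinv]
        have h1 : ‖pf p x‖ ≤ s :=
          abs_le_supNorm (continuous_pf p).continuousOn hx
        calc (ε * s)⁻¹ * ‖pf p x‖ ≤ (ε * s)⁻¹ * s :=
              mul_le_mul_of_nonneg_left h1 (by positivity)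
          _ = ε⁻¹ := by field_simp
      have hQq : ∀ x, Qop m n ζ σ ε (pf q) x = ((ε * s : ℝ):ℂ)⁻¹ * Qop m n ζ σ ε (pf p) x := by
        intro x
        rw [Qop, Qop, Finset.mul_sum]
        refine Finset.sum_congr rfl fun i _ => ?_
        have h1 : pf q = fun y => ((ε * s : ℝ):ℂ)⁻¹ * pf p y := funext hqpf
        rw [h1, discInner_const_mul_left]
        ring
      have hrle : supNorm (Set.Icc (-1:ℝ) 1) (fun x => pf q x - Qop m n ζ σ ε (pf q) x) ≤
          C2const m n γ ζ σ ε := by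
        rw [C2const]
        exact le_csSup (C2_bddAbove hσ (le_of_lt hγ) hε hm) ⟨q, hqdeg, hqsup, rfl⟩
      have hC2 : 0 ≤ C2const m n γ ζ σ ε := (supNorm_nonneg _ _).trans hrle
      refine supNorm_le (by positivity) fun x hx => ?_
      have hqQ : ContinuousOn (fun x => pf q x - Qop m n ζ σ ε (pf q) x) (Set.Icc (-1:ℝ) 1) :=
        ((continuous_pf q).sub (hQcont (pf q))).continuousOn
      have h2 : ‖pf q x - Qop m n ζ σ ε (pf q) x‖ ≤ C2const m n γ ζ σ ε :=
        (abs_le_supNorm hqQ hx).trans hrle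
      have h3 : pf q x - Qop m n ζ σ ε (pf q) x =
          ((ε * s : ℝ):ℂ)⁻¹ * (pf p x - Qop m n ζ σ ε (pf p) x) := by
        rw [hqpf x, hQq x]; ring
      have h4 : ‖pf p x - Qop m n ζ σ ε (pf p) x‖ =
          (ε * s) * ‖pf q x - Qop m n ζ σ ε (pf q) x‖ := by
        rw [h3, norm_mul, habsinv]
        field_simp
      rw [h4]
      calc (ε * s) * ‖pf q x - Qop m n ζ σ ε (pf q) x‖
          ≤ (ε * s) * C2const m n γ ζ σ ε := mul_le_mul_of_nonneg_left h2 (by positivity)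
        _ = C2const m n γ ζ σ ε * ε * s := by ring
  -- combine
  have hQlin : ∀ x, Qop m n ζ σ ε g x = Qop m n ζ σ ε f x - Qop m n ζ σ ε (pf p) x := by
    intro x
    rw [Qop, Qop, Qop, ← Finset.sum_sub_distrib]
    refine Finset.sum_congr rfl fun i _ => ?_
    rw [hg]
    rw [discInner_sub_left]
    ring
  have htot : supNorm (Set.Icc (-1:ℝ) 1) (fun x => f x - Qop m n ζ σ ε f x) ≤
      t + supNorm (Set.Icc (-1:ℝ) 1) (Qop m n ζ σ ε g) +
        supNorm (Set.Icc (-1:ℝ) 1) (fun x => pf p x - Qop m n ζ σ ε (pf p) x) := by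
    have hn1 : 0 ≤ supNorm (Set.Icc (-1:ℝ) 1) (Qop m n ζ σ ε g) := supNorm_nonneg _ _
    have hn2 : 0 ≤ supNorm (Set.Icc (-1:ℝ) 1)
        (fun x => pf p x - Qop m n ζ σ ε (pf p) x) := supNorm_nonneg _ _
    refine supNorm_le (by linarith) fun x hx => ?_
    have hid : f x - Qop m n ζ σ ε f x =
        g x + (-(Qop m n ζ σ ε g x)) + (pf p x - Qop m n ζ σ ε (pf p) x) := by
      rw [hQlin x, hg]; ring
    rw [hid]
    calc ‖g x + (-(Qop m n ζ σ ε g x)) + (pf p x - Qop m n ζ σ ε (pf p) x)‖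
        ≤ ‖g x + (-(Qop m n ζ σ ε g x))‖ +
          ‖pf p x - Qop m n ζ σ ε (pf p) x‖ := norm_add_le _ _
      _ ≤ ‖g x‖ + ‖-(Qop m n ζ σ ε g x)‖ +
          ‖pf p x - Qop m n ζ σ ε (pf p) x‖ := by
            have := norm_add_le (g x) (-(Qop m n ζ σ ε g x))
            linarith
      _ ≤ t + supNorm (Set.Icc (-1:ℝ) 1) (Qop m n ζ σ ε g) +
          supNorm (Set.Icc (-1:ℝ) 1) (fun x => pf p x - Qop m n ζ σ ε (pf p) x) := by
            have e1 : ‖g x‖ ≤ t := abs_le_supNorm hgc hx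
            have e2 : ‖-(Qop m n ζ σ ε g x)‖ ≤
                supNorm (Set.Icc (-1:ℝ) 1) (Qop m n ζ σ ε g) := by
              rw [norm_neg]
              exact abs_le_supNorm (hQcont g).continuousOn hx
            have e3 : ‖pf p x - Qop m n ζ σ ε (pf p) x‖ ≤
                supNorm (Set.Icc (-1:ℝ) 1) (fun x => pf p x - Qop m n ζ σ ε (pf p) x) :=
              abs_le_supNorm ((continuous_pf p).continuousOn.sub
                (hQcont (pf p)).continuousOn) hx
            linarith
  calc supNorm (Set.Icc (-1:ℝ) 1) (fun x => f x - Qop m n ζ σ ε f x)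
      ≤ t + supNorm (Set.Icc (-1:ℝ) 1) (Qop m n ζ σ ε g) +
        supNorm (Set.Icc (-1:ℝ) 1) (fun x => pf p x - Qop m n ζ σ ε (pf p) x) := htot
    _ ≤ t + Real.sqrt ((m:ℝ) + 1) * C1const m n ζ σ ε * t +
        C2const m n γ ζ σ ε * ε * s := by linarith
    _ = (1 + Real.sqrt ((m : ℝ) + 1) * C1const m n ζ σ ε) * t +
        C2const m n γ ζ σ ε * ε * s := by ring
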